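/- (Lemma, strict classical subsolution: generator inequality.) Let r, μ ∈ ℝ, σ ∈ ℝ, q ∈ (0,1), λ > q·max{r, μ, 0}, a ∈ {0,1}, S ∈ ℝ, B > 0 and T' ∈ ℝ. Define F(t, x₀, x₁) := S − B·e^{λ(T'−t)}·(a + x₀ + x₁)^q. Then for every t ∈ ℝ and every x = (x₀,x₁) ∈ 𝒮̄ with a + x₀ + x₁ > 0, the classical partial derivatives of F exist at (t,x) and 𝓛[F](t,x) = B e^{λ(T'−t)} (a + x₀ + x₁)^q · [ −λ + q r x₀/(a+x₀+x₁) + q μ x₁/(a+x₀+x₁) + q(q−1) σ² x₁² / (2 (a+x₀+x₁)²) ] ≤ B e^{λ(T'−t)} (a + x₀ + x₁)^q · ( −λ + q·max{r, μ, 0} ) < 0. -/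

import Mathlib

open Set Filter Topology

/-- The (negative of the) infinitesimal generator `𝓛[φ](t,x)` of the portfolio dynamics,
written in terms of classical partial derivatives of the (curried) function `φ`. -/
noncomputable def gen (r μ σ : ℝ) (φ : ℝ → ℝ → ℝ → ℝ) (t x₀ x₁ : ℝ) : ℝ :=
  -(deriv (fun s => φ s x₀ x₁) t)
    - r * x₀ * deriv (fun y => φ t y x₁) x₀
    - μ * x₁ * deriv (fun y => φ t x₀ y) x₁
    - σ ^ 2 / 2 * x₁ ^ 2 * deriv (deriv (fun y => φ t x₀ y)) x₁

/-- (Lemma, strict classical subsolution: generator inequality.) -/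
theorem generator_strict_subsolution
    (r μ σ q lam a S B T' : ℝ)
    (hq0 : 0 < q) (hq1 : q < 1) (hlam : q * max r (max μ 0) < lam)
    (ha : a = 0 ∨ a = 1) (hB : 0 < B)
    (F : ℝ → ℝ → ℝ → ℝ)
    (hF : ∀ t x₀ x₁ : ℝ, F t x₀ x₁ = S - B * Real.exp (lam * (T' - t)) * (a + x₀ + x₁) ^ q) :
    ∀ t x₀ x₁ : ℝ, 0 ≤ x₀ → 0 ≤ x₁ → 0 < a + x₀ + x₁ →
      DifferentiableAt ℝ (fun s => F s x₀ x₁) t ∧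
      DifferentiableAt ℝ (fun y => F t y x₁) x₀ ∧
      DifferentiableAt ℝ (fun y => F t x₀ y) x₁ ∧
      DifferentiableAt ℝ (deriv (fun y => F t x₀ y)) x₁ ∧
      gen r μ σ F t x₀ x₁ =
        B * Real.exp (lam * (T' - t)) * (a + x₀ + x₁) ^ q *
          (-lam + q * r * x₀ / (a + x₀ + x₁) + q * μ * x₁ / (a + x₀ + x₁)
            + q * (q - 1) * σ ^ 2 * x₁ ^ 2 / (2 * (a + x₀ + x₁) ^ 2)) ∧
      gen r μ σ F t x₀ x₁ ≤
        B * Real.exp (lam * (T' - t)) * (a + x₀ + x₁) ^ q * (-lam + q * max r (max μ 0)) ∧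
      B * Real.exp (lam * (T' - t)) * (a + x₀ + x₁) ^ q * (-lam + q * max r (max μ 0)) < 0 := by
  intro t x₀ x₁ hx₀ hx₁ hc
  have hcne : a + x₀ + x₁ ≠ 0 := ne_of_gt hc
  set E : ℝ := Real.exp (lam * (T' - t)) with hE
  have hEpos : 0 < E := Real.exp_pos _
  set c : ℝ := a + x₀ + x₁ with hcdef
  -- derivative in t
  have h1 : HasDerivAt (fun s => F s x₀ x₁) (B * lam * Real.exp (lam * (T' - t)) * c ^ q) t := by
    have hfun : (fun s => F s x₀ x₁) = fun s => S - B * Real.exp (lam * (T' - s)) * c ^ q :=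
      funext fun s => hF s x₀ x₁
    rw [hfun]
    have hin : HasDerivAt (fun s : ℝ => lam * (T' - s)) (lam * (-1)) t :=
      (((hasDerivAt_id t).const_sub T').const_mul lam)
    have h := ((hin.exp.const_mul B).mul_const (c ^ q)).const_sub S
    refine h.congr_deriv ?_
    ring
  -- derivative in x₀
  have h2 : HasDerivAt (fun y => F t y x₁) (-(B * E * q) * c ^ (q - 1)) x₀ := by
    have hfun : (fun y => F t y x₁) = fun y => S - B * E * (a + y + x₁) ^ q :=
      funext fun y => hF t y x₁
    rw [hfun]
    have hin : HasDerivAt (fun y : ℝ => a + y + x₁) 1 x₀ := by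
      simpa using (((hasDerivAt_id x₀).const_add a).add_const x₁)
    have h := ((hin.rpow_const (p := q) (Or.inl hcne)).const_mul (B * E)).const_sub S
    refine h.congr_deriv ?_
    rw [hcdef]; ring
  -- derivative in x₁, valid near x₁
  have key : ∀ y : ℝ, a + x₀ + y ≠ 0 →
      HasDerivAt (fun z => F t x₀ z) (-(B * E * q) * (a + x₀ + y) ^ (q - 1)) y := by
    intro y hy
    have hfun : (fun z => F t x₀ z) = fun z => S - B * E * (a + x₀ + z) ^ q :=
      funext fun z => hF t x₀ z
    rw [hfun]
    have hin : HasDerivAt (fun z : ℝ => a + x₀ + z) 1 y := by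
      simpa using ((hasDerivAt_id y).const_add (a + x₀))
    have h := ((hin.rpow_const (p := q) (Or.inl hy)).const_mul (B * E)).const_sub S
    refine h.congr_deriv ?_
    ring
  have h3 : HasDerivAt (fun y => F t x₀ y) (-(B * E * q) * c ^ (q - 1)) x₁ := key x₁ hcne
  -- second derivative in x₁
  have hnear : ∀ᶠ y in 𝓝 x₁, 0 < a + x₀ + y := by
    have hcont : Continuous fun y : ℝ => a + x₀ + y := continuous_const.add continuous_id
    exact (hcont.tendsto x₁).eventually (eventually_gt_nhds hc)
  have heq : deriv (fun y => F t x₀ y) =ᶠ[𝓝 x₁]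
      fun y => -(B * E * q) * (a + x₀ + y) ^ (q - 1) :=
    hnear.mono fun y hy => (key y (ne_of_gt hy)).deriv
  have h4fun : HasDerivAt (fun y => -(B * E * q) * (a + x₀ + y) ^ (q - 1))
      (-(B * E * q) * ((q - 1) * c ^ (q - 2))) x₁ := by
    have hin : HasDerivAt (fun z : ℝ => a + x₀ + z) 1 x₁ := by
      simpa using ((hasDerivAt_id x₁).const_add (a + x₀))
    have h := (hin.rpow_const (p := q - 1) (Or.inl hcne)).const_mul (-(B * E * q))
    refine h.congr_deriv ?_
    rw [show q - 1 - 1 = q - 2 by ring]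
    ring
  have h4 : HasDerivAt (deriv (fun y => F t x₀ y))
      (-(B * E * q) * ((q - 1) * c ^ (q - 2))) x₁ :=
    h4fun.congr_of_eventuallyEq heq
  have hgen : gen r μ σ F t x₀ x₁ =
      B * Real.exp (lam * (T' - t)) * c ^ q *
        (-lam + q * r * x₀ / c + q * μ * x₁ / c
          + q * (q - 1) * σ ^ 2 * x₁ ^ 2 / (2 * c ^ 2)) := by
    rw [gen, h1.deriv, h2.deriv, h3.deriv, h4.deriv]
    have e1 : c ^ (q - 1) = c ^ q / c := by
      rw [Real.rpow_sub hc, Real.rpow_one]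
    have e2 : c ^ (q - 2) = c ^ q / c ^ 2 := by
      rw [Real.rpow_sub hc, show (2 : ℝ) = ((2 : ℕ) : ℝ) by norm_num, Real.rpow_natCast]
    rw [e1, e2, hE]
    field_simp
    ring
  have hM0 : 0 ≤ max r (max μ 0) := le_max_of_le_right (le_max_right _ _)
  have hr : r ≤ max r (max μ 0) := le_max_left _ _
  have hμ : μ ≤ max r (max μ 0) := le_max_of_le_right (le_max_left _ _)
  have ha0 : 0 ≤ a := by rcases ha with h | h <;> rw [h] <;> norm_num
  have hP : 0 < B * Real.exp (lam * (T' - t)) * c ^ q := by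
    have := Real.rpow_pos_of_pos hc q
    positivity
  refine ⟨h1.differentiableAt, h2.differentiableAt, h3.differentiableAt, h4.differentiableAt,
    hgen, ?_, ?_⟩
  · -- the inequality
    rw [hgen, hE]
    refine mul_le_mul_of_nonneg_left ?_ (le_of_lt hP)
    set M := max r (max μ 0) with hM
    have ht3 : q * (q - 1) * σ ^ 2 * x₁ ^ 2 / (2 * c ^ 2) ≤ 0 := by
      apply div_nonpos_of_nonpos_of_nonneg
      · nlinarith [mul_nonneg (mul_nonneg hq0.le (by linarith : (0:ℝ) ≤ 1 - q))
          (mul_nonneg (sq_nonneg σ) (sq_nonneg x₁))]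
      · positivity
    have hsum : q * r * x₀ / c + q * μ * x₁ / c ≤ q * M := by
      rw [← add_div, div_le_iff₀ hc]
      have h1 : q * r * x₀ ≤ q * M * x₀ :=
        mul_le_mul_of_nonneg_right (mul_le_mul_of_nonneg_left hr hq0.le) hx₀
      have h2 : q * μ * x₁ ≤ q * M * x₁ :=
        mul_le_mul_of_nonneg_right (mul_le_mul_of_nonneg_left hμ hq0.le) hx₁
      have h3 : q * M * (x₀ + x₁) ≤ q * M * c := by
        apply mul_le_mul_of_nonneg_left _ (mul_nonneg hq0.le hM0)
        rw [hcdef]; linarith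
      linarith
    linarith
  · exact mul_neg_of_pos_of_neg hP (by linarith)
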